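/- (Analytic core of Proposition 4.4: limit of the expected upcrossing time, written via the Green kernel.) Let 0 < α < β and define h_ε(w,y) := (ε²/σ(yε)²)·exp( ∫_{wε}^{yε} (ε·b₁(l) − b₂(l))/σ(l)² dl ) and H(w,y) := e^{(a/s²)(1/w − 1/y)}·w^{b/s²}/y^{b/s²+2}. Then lim_{ε→0⁺} 2·[ ∫_0^α ∫_α^β h_ε(w,y) dw dy + ∫_α^β ∫_y^β h_ε(w,y) dw dy ] = (2/s²)·[ ∫_0^α ∫_α^β H(w,y) dw dy + ∫_α^β ∫_y^β H(w,y) dw dy ], and this limit is finite and positive. (The left-hand side equals the expected hitting time E_{αε}[T_{βε}] of level βε for the diffusion with λ = 1 started at αε.) -/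

import Mathlib

open MeasureTheory Real Set Filter
open scoped Topology

section AuxStatement7

open intervalIntegral

private lemma aux_uIcc_pos' {w y : ℝ} (hw : 0 < w) (hy : 0 < y) : uIcc w y ⊆ Ioi 0 :=
  fun _t ht => lt_of_lt_of_le (lt_min hw hy) ht.1

private lemma aux_slope' {g : ℝ → ℝ} {s' : ℝ} (hg : HasDerivWithinAt g s' (Ici 0) 0)
    (h0 : g 0 = 0) : Tendsto (fun t => g t / t) (𝓝[>] 0) (𝓝 s') := by
  have h := hasDerivWithinAt_iff_tendsto_slope.mp hg
  have hset : (Ici (0:ℝ)) \ {0} = Ioi 0 := by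
    ext x; simp [mem_diff, mem_Ici, mem_Ioi, lt_iff_le_and_ne, eq_comm]
  rw [hset] at h
  exact h.congr fun t => by simp [slope, h0, div_eq_inv_mul]

private lemma aux_pow_le_exp' {x : ℝ} (hx : 0 ≤ x) (n : ℕ) (hn : 1 ≤ n) :
    x ^ n ≤ (n : ℝ) ^ n * Real.exp x := by
  have hn0 : (0:ℝ) < n := by exact_mod_cast hn
  have h1 : x / n ≤ Real.exp (x / n) := by
    have := Real.add_one_le_exp (x / n)
    linarith [div_nonneg hx hn0.le]
  have h2 : (x / n) ^ n ≤ Real.exp (x / n) ^ n :=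
    pow_le_pow_left₀ (div_nonneg hx hn0.le) h1 n
  have h3 : Real.exp (x / n) ^ n = Real.exp x := by
    rw [← Real.exp_nat_mul]; congr 1; field_simp
  rw [h3] at h2
  have h4 : x ^ n = (n:ℝ)^n * (x / n)^n := by
    rw [div_pow]; field_simp
  rw [h4]
  exact mul_le_mul_of_nonneg_left h2 (by positivity)

private lemma aux_ftc' {A B w y : ℝ} (hw : 0 < w) (hy : 0 < y) :
    ∫ u in w..y, (A - B * u) / u ^ 2 =
      (A / w - A / y) + (B * Real.log w - B * Real.log y) := by
  have hsub : uIcc w y ⊆ Ioi 0 := aux_uIcc_pos' hw hy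
  have hderiv : ∀ u ∈ uIcc w y,
      HasDerivAt (fun u => -(A * u⁻¹) - B * Real.log u) ((A - B * u) / u ^ 2) u := by
    intro u hu
    have hu0 : (0:ℝ) < u := hsub hu
    have h1 : HasDerivAt (fun u : ℝ => -(A * u⁻¹)) (-(A * (-(u^2)⁻¹))) u :=
      ((hasDerivAt_inv hu0.ne').const_mul A).neg
    have h2 : HasDerivAt (fun u : ℝ => B * Real.log u) (B * u⁻¹) u :=
      (Real.hasDerivAt_log hu0.ne').const_mul B
    refine (h1.sub h2).congr_deriv ?_
    field_simp
  have hcont : ContinuousOn (fun u => (A - B * u) / u ^ 2) (uIcc w y) := by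
    apply ContinuousOn.div (by fun_prop) (by fun_prop)
    intro u hu
    exact pow_ne_zero 2 (ne_of_gt (hsub hu))
  rw [integral_eq_sub_of_hasDerivAt hderiv (hcont.intervalIntegrable)]
  have hw0 : w ≠ 0 := hw.ne'
  have hy0 : y ≠ 0 := hy.ne'
  field_simp
  ring

private lemma aux_prim_cont' {f : ℝ → ℝ} (hf : ContinuousOn f (Ioi 0)) {p : ℝ} (hp : 0 < p) :
    ContinuousOn (fun x => ∫ t in p..x, f t) (Ioi 0) := by
  intro x hx
  have hx0 : (0:ℝ) < x := hx
  have hint : IntervalIntegrable f volume p x :=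
    (hf.mono (aux_uIcc_pos' hp hx0)).intervalIntegrable
  have hmeas : StronglyMeasurableAtFilter f (𝓝 x) volume :=
    hf.stronglyMeasurableAtFilter isOpen_Ioi x hx
  have hca : ContinuousAt f x := hf.continuousAt (isOpen_Ioi.mem_nhds hx)
  exact ((integral_hasDerivAt_right hint hmeas hca).continuousAt).continuousWithinAt

end AuxStatement7

set_option maxHeartbeats 1600000 in
/-- (Analytic core of Proposition 4.4: limit of the expected upcrossing time via the Green
kernel.) Let `0 < α < β`, `h_ε(w,y) := (ε²/σ(yε)²)·exp(∫_{wε}^{yε} (ε·b₁ − b₂)/σ² dl)` and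
`H(w,y) := e^{(a/s²)(1/w − 1/y)}·w^{b/s²}/y^{b/s²+2}`. Then
`lim_{ε→0⁺} 2·[∫_0^α ∫_α^β h_ε + ∫_α^β ∫_y^β h_ε]
  = (2/s²)·[∫_0^α ∫_α^β H + ∫_α^β ∫_y^β H]`, and this limit is finite and positive. -/
theorem statement7
    (b1 b2 σ : ℝ → ℝ)
    (hb1 : ContDiffOn ℝ 1 b1 (Ici 0))
    (hb1inf : ∃ m > 0, ∀ x ∈ Ici (0 : ℝ), m ≤ b1 x)
    (hb1sup : ∃ M : ℝ, ∀ x ∈ Ici (0 : ℝ), b1 x ≤ M)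
    (hb2 : ContDiffOn ℝ 2 b2 (Ici 0))
    (hb2nonneg : ∀ x ∈ Ici (0 : ℝ), 0 ≤ b2 x)
    (hb20 : b2 0 = 0)
    (hσ : ContDiffOn ℝ 2 σ (Ici 0))
    (hσnonneg : ∀ x ∈ Ici (0 : ℝ), 0 ≤ σ x)
    (hσzero : ∀ x ∈ Ici (0 : ℝ), (σ x = 0 ↔ x = 0))
    (a b s : ℝ)
    (ha : a = b1 0)
    (hb : b = derivWithin b2 (Ici 0) 0) (hbpos : 0 < b)
    (hs : s = derivWithin σ (Ici 0) 0) (hspos : 0 < s)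
    (α β : ℝ) (hα : 0 < α) (hαβ : α < β)
    (hε : ℝ → ℝ → ℝ → ℝ)
    (hεdef : ∀ ε w y : ℝ, hε ε w y =
      ε ^ 2 / σ (y * ε) ^ 2 *
        Real.exp (∫ l in (w * ε)..(y * ε), (ε * b1 l - b2 l) / σ l ^ 2))
    (H : ℝ → ℝ → ℝ)
    (Hdef : ∀ w y : ℝ, H w y =
      Real.exp (a / s ^ 2 * (1 / w - 1 / y)) * w ^ (b / s ^ 2) / y ^ (b / s ^ 2 + 2)) :
    Tendsto
      (fun ε : ℝ =>
        2 * ((∫ y in (0 : ℝ)..α, ∫ w in α..β, hε ε w y) +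
          (∫ y in α..β, ∫ w in y..β, hε ε w y)))
      (𝓝[>] (0 : ℝ))
      (𝓝 (2 / s ^ 2 * ((∫ y in (0 : ℝ)..α, ∫ w in α..β, H w y) +
        (∫ y in α..β, ∫ w in y..β, H w y)))) ∧
    0 < 2 / s ^ 2 * ((∫ y in (0 : ℝ)..α, ∫ w in α..β, H w y) +
        (∫ y in α..β, ∫ w in y..β, H w y)) := by
  obtain ⟨m, hm, hmb1⟩ := hb1inf
  obtain ⟨M, hMb1⟩ := hb1sup
  have hσ0 : σ 0 = 0 := (hσzero 0 self_mem_Ici).mpr rfl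
  have hσpos : ∀ x : ℝ, 0 < x → 0 < σ x := by
    intro x hx
    rcases lt_or_eq_of_le (hσnonneg x (mem_Ici.mpr hx.le)) with h | h
    · exact h
    · exact absurd ((hσzero x (mem_Ici.mpr hx.le)).mp h.symm) hx.ne'
  have hM0 : 0 < M := lt_of_lt_of_le hm (le_trans (hmb1 0 self_mem_Ici) (hMb1 0 self_mem_Ici))
  have hβ : (0:ℝ) < β := hα.trans hαβ
  have hs' : s ≠ 0 := hspos.ne'
  have hb1c : ContinuousOn b1 (Ici 0) := hb1.continuousOn
  have hb2c : ContinuousOn b2 (Ici 0) := hb2.continuousOn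
  have hσc : ContinuousOn σ (Ici 0) := hσ.continuousOn
  have hfc : ∀ ε : ℝ, ContinuousOn (fun l => (ε * b1 l - b2 l) / σ l ^ 2) (Ioi 0) := by
    intro ε
    apply ContinuousOn.div
    · exact (continuousOn_const.mul (hb1c.mono Ioi_subset_Ici_self)).sub
        (hb2c.mono Ioi_subset_Ici_self)
    · exact (hσc.mono Ioi_subset_Ici_self).pow 2
    · intro l hl; exact pow_ne_zero 2 (hσpos l hl).ne'
  have hfint : ∀ (ε : ℝ) {p q : ℝ}, 0 < p → 0 < q →
      IntervalIntegrable (fun l => (ε * b1 l - b2 l) / σ l ^ 2) volume p q :=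
    fun ε {p q} hp hq => ((hfc ε).mono (aux_uIcc_pos' hp hq)).intervalIntegrable
  have hσslope : Tendsto (fun t => σ t / t) (𝓝[>] 0) (𝓝 s) := by
    have hd : DifferentiableWithinAt ℝ σ (Ici 0) 0 :=
      (hσ.differentiableOn (by norm_num)) 0 self_mem_Ici
    have h := hd.hasDerivWithinAt
    rw [← hs] at h
    exact aux_slope' h hσ0
  have hb2slope : Tendsto (fun t => b2 t / t) (𝓝[>] 0) (𝓝 b) := by
    have hd : DifferentiableWithinAt ℝ b2 (Ici 0) 0 :=
      (hb2.differentiableOn (by norm_num)) 0 self_mem_Ici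
    have h := hd.hasDerivWithinAt
    rw [← hb] at h
    exact aux_slope' h hb20
  have hslope2 : Tendsto (fun t => t / σ t) (𝓝[>] 0) (𝓝 s⁻¹) := by
    have h := hσslope.inv₀ hspos.ne'
    refine h.congr (fun t => ?_)
    rw [inv_div]
  obtain ⟨δ, hδ0, hδ⟩ : ∃ δ > 0, ∀ l : ℝ, 0 < l → l ≤ δ →
      s/2 * l ≤ σ l ∧ σ l ≤ 2*s*l ∧ b2 l ≤ 2*b*l := by
    have e1 : ∀ᶠ t in 𝓝[>] (0:ℝ), σ t / t ∈ Ioo (s/2) (2*s) :=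
      hσslope.eventually (Ioo_mem_nhds (by linarith) (by linarith))
    have e2 : ∀ᶠ t in 𝓝[>] (0:ℝ), b2 t / t < 2*b :=
      hb2slope.eventually (Filter.Tendsto.eventually_lt_const (by linarith) tendsto_id)
    obtain ⟨u, hu, husub⟩ := mem_nhdsGT_iff_exists_Ioc_subset.mp (e1.and e2)
    refine ⟨u, hu, fun l hl hlu => ?_⟩
    obtain ⟨⟨h1, h2⟩, h3⟩ := husub ⟨hl, hlu⟩
    refine ⟨?_, ?_, ?_⟩
    · calc s/2 * l ≤ σ l / l * l := by nlinarith
        _ = σ l := div_mul_cancel₀ _ hl.ne'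
    · calc σ l = σ l / l * l := (div_mul_cancel₀ _ hl.ne').symm
        _ ≤ 2*s*l := by nlinarith
    · calc b2 l = b2 l / l * l := (div_mul_cancel₀ _ hl.ne').symm
        _ ≤ 2*b*l := by nlinarith
  have hmulpos : ∀ u : ℝ, 0 < u → Tendsto (fun ε : ℝ => u * ε) (𝓝[>] 0) (𝓝[>] 0) := by
    intro u hu
    apply tendsto_nhdsWithin_of_tendsto_nhds_of_eventually_within
    · have h : Tendsto (fun ε : ℝ => u * ε) (𝓝 0) (𝓝 (u * 0)) :=
        (continuous_const.mul continuous_id).tendsto 0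
      simpa using h.mono_left nhdsWithin_le_nhds
    · exact eventually_mem_nhdsWithin.mono (fun ε (hε : ε ∈ Ioi 0) => mul_pos hu hε)
  -- pointwise limit
  have hP : ∀ w y : ℝ, 0 < w → 0 < y →
      Tendsto (fun ε => hε ε w y) (𝓝[>] 0) (𝓝 (H w y / s ^ 2)) := by
    intro w y hw hy
    have hpre : Tendsto (fun ε : ℝ => ε ^ 2 / σ (y * ε) ^ 2) (𝓝[>] 0)
        (𝓝 ((s⁻¹ * (1/y)) ^ 2)) := by
      have h3 : Tendsto (fun ε : ℝ => (y * ε) / σ (y * ε)) (𝓝[>] 0) (𝓝 s⁻¹) :=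
        hslope2.comp (hmulpos y hy)
      have h4 := (h3.mul_const (1/y)).pow 2
      refine h4.congr (fun ε => ?_)
      have hy' : y ≠ 0 := hy.ne'
      rcases eq_or_ne (σ (y*ε)) 0 with h | h
      · simp [h]
      · field_simp
    set Lexp : ℝ := (a/s^2/w - a/s^2/y) + (b/s^2 * Real.log w - b/s^2 * Real.log y) with hLexp
    have hexp : Tendsto (fun ε : ℝ => ∫ l in (w*ε)..(y*ε), (ε * b1 l - b2 l) / σ l ^ 2)
        (𝓝[>] 0) (𝓝 Lexp) := by
      have hrw : ∀ ε : ℝ, (∫ l in (w*ε)..(y*ε), (ε * b1 l - b2 l) / σ l ^ 2) =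
          ∫ u in w..y, ε * ((ε * b1 (u*ε) - b2 (u*ε)) / σ (u*ε) ^ 2) := by
        intro ε
        rw [← intervalIntegral.smul_integral_comp_mul_right
          (fun l => (ε * b1 l - b2 l) / σ l ^ 2) ε, ← intervalIntegral.integral_smul]
        simp [smul_eq_mul]
      have hdct : Tendsto
          (fun ε : ℝ => ∫ u in w..y, ε * ((ε * b1 (u*ε) - b2 (u*ε)) / σ (u*ε) ^ 2))
          (𝓝[>] 0) (𝓝 (∫ u in w..y, (a/s^2 - b/s^2 * u) / u ^ 2)) := by
        have hwy0 : (0:ℝ) < min w y := lt_min hw hy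
        have hImem : uIoc w y ⊆ Ioi 0 := fun t ht => lt_of_lt_of_le hwy0 (le_of_lt ht.1)
        apply intervalIntegral.tendsto_integral_filter_of_dominated_convergence
          (bound := fun u => 4 * (M + 2*b*u) / (s^2 * u^2))
        · filter_upwards [self_mem_nhdsWithin] with ε (hε' : ε ∈ Ioi 0)
          apply ContinuousOn.aestronglyMeasurable _ measurableSet_uIoc
          have h5 : ContinuousOn (fun u => (ε * b1 (u*ε) - b2 (u*ε)) / σ (u*ε) ^ 2) (Ioi 0) := by
            apply (hfc ε).comp (continuous_mul_right ε).continuousOn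
            intro u hu; exact mul_pos hu (mem_Ioi.mp hε')
          exact (continuousOn_const.mul h5).mono hImem
        · have hev : Ioc (0:ℝ) (δ / max w y) ∈ 𝓝[>] (0:ℝ) :=
            Ioc_mem_nhdsGT_of_mem ⟨le_rfl, div_pos hδ0 (lt_max_of_lt_left hw)⟩
          filter_upwards [hev] with ε hεm
          refine ae_of_all _ (fun u hu => ?_)
          have hu0 : (0:ℝ) < u := hImem hu
          have hε0 : (0:ℝ) < ε := hεm.1
          have huε : u * ε ≤ δ := by
            have humax : u ≤ max w y := hu.2
            calc u * ε ≤ max w y * ε := by nlinarith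
              _ ≤ max w y * (δ / max w y) := by
                  have h6 : (0:ℝ) < max w y := lt_max_of_lt_left hw
                  nlinarith [hεm.2]
              _ = δ := by field_simp
          obtain ⟨hσlo, hσhi, hb2hi⟩ := hδ (u*ε) (mul_pos hu0 hε0) huε
          have hσp : 0 < σ (u*ε) := hσpos _ (mul_pos hu0 hε0)
          have hnum : |ε * b1 (u*ε) - b2 (u*ε)| ≤ ε * M + 2*b*(u*ε) := by
            have h1 : m ≤ b1 (u*ε) := hmb1 _ (mem_Ici.mpr (mul_pos hu0 hε0).le)
            have h2 : b1 (u*ε) ≤ M := hMb1 _ (mem_Ici.mpr (mul_pos hu0 hε0).le)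
            have h3 : 0 ≤ b2 (u*ε) := hb2nonneg _ (mem_Ici.mpr (mul_pos hu0 hε0).le)
            rw [abs_le]; constructor <;> nlinarith
          have hden : (s/2 * (u*ε))^2 ≤ σ (u*ε) ^ 2 := by nlinarith
          rw [Real.norm_eq_abs, abs_mul, abs_div, abs_of_pos hε0,
            abs_of_nonneg (sq_nonneg (σ (u*ε)))]
          have hnumnn : (0:ℝ) ≤ ε * M + 2*b*(u*ε) := by
            have q1 : (0:ℝ) ≤ ε * M := mul_nonneg hε0.le hM0.le
            have q2 : (0:ℝ) ≤ 2*b*(u*ε) :=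
              mul_nonneg (by linarith) (mul_nonneg hu0.le hε0.le)
            linarith
          have hdpos : (0:ℝ) < (s/2 * (u*ε))^2 := by positivity
          have h5 : |ε * b1 (u*ε) - b2 (u*ε)| / σ (u*ε)^2 ≤
              (ε*M + 2*b*(u*ε)) / (s/2*(u*ε))^2 := div_le_div₀ hnumnn hnum hdpos hden
          have hu' : u ≠ 0 := hu0.ne'
          have hε' : ε ≠ 0 := hε0.ne'
          calc ε * (|ε * b1 (u*ε) - b2 (u*ε)| / σ (u*ε)^2)
              ≤ ε * ((ε*M + 2*b*(u*ε)) / (s/2*(u*ε))^2) :=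
                mul_le_mul_of_nonneg_left h5 hε0.le
            _ = 4 * (M + 2*b*u) / (s^2 * u^2) := by field_simp; ring
        · apply ContinuousOn.intervalIntegrable
          apply ContinuousOn.div (by fun_prop) (by fun_prop)
          intro u hu
          have h6 : (0:ℝ) < u := aux_uIcc_pos' hw hy hu
          positivity
        · refine ae_of_all _ (fun u hu => ?_)
          have hu0 : (0:ℝ) < u := hImem hu
          have h1 := hmulpos u hu0
          have hb1t : Tendsto (fun ε : ℝ => b1 (u*ε)) (𝓝[>] 0) (𝓝 (b1 0)) := by
            have h2 : Tendsto (fun ε : ℝ => u*ε) (𝓝[>] 0) (𝓝[Ici 0] 0) :=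
              h1.mono_right (nhdsWithin_mono 0 Ioi_subset_Ici_self)
            exact ((hb1c 0 self_mem_Ici).tendsto).comp h2
          have hb2t : Tendsto (fun ε : ℝ => b2 (u*ε)/(u*ε)) (𝓝[>] 0) (𝓝 b) :=
            hb2slope.comp h1
          have hσt : Tendsto (fun ε : ℝ => (u*ε)/σ (u*ε)) (𝓝[>] 0) (𝓝 s⁻¹) :=
            hslope2.comp h1
          have htend := ((hb1t.sub (hb2t.const_mul u)).mul (hσt.pow 2)).div_const (u^2)
          have hEq : ∀ᶠ ε in 𝓝[>] (0:ℝ),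
              (b1 (u*ε) - u * (b2 (u*ε)/(u*ε))) * ((u*ε)/σ (u*ε))^2 / u^2
              = ε * ((ε * b1 (u*ε) - b2 (u*ε)) / σ (u*ε) ^ 2) := by
            filter_upwards [self_mem_nhdsWithin] with ε (hεm : ε ∈ Ioi 0)
            have hε' : ε ≠ 0 := (mem_Ioi.mp hεm).ne'
            have hu' : u ≠ 0 := hu0.ne'
            rcases eq_or_ne (σ (u*ε)) 0 with h | h
            · simp [h]
            · field_simp
          have hfin := htend.congr' hEq
          have hvaleq : (b1 0 - u * b) * (s⁻¹)^2 / u^2 = (a/s^2 - b/s^2 * u) / u^2 := by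
            rw [← ha]
            field_simp
          rwa [hvaleq] at hfin
      rw [aux_ftc' hw hy] at hdct
      have h7 : Lexp = (a/s^2/w - a/s^2/y) + (b/s^2 * Real.log w - b/s^2 * Real.log y) := hLexp
      rw [← h7] at hdct
      exact hdct.congr (fun ε => (hrw ε).symm)
    have hcomb := hpre.mul ((Real.continuous_exp.tendsto _).comp hexp)
    have heq : (fun ε => hε ε w y) =
        fun ε => ε ^ 2 / σ (y * ε) ^ 2 *
          Real.exp (∫ l in (w*ε)..(y*ε), (ε * b1 l - b2 l) / σ l ^ 2) := by
      funext ε; rw [hεdef]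
    rw [heq]
    have hval : (s⁻¹ * (1/y)) ^ 2 * Real.exp Lexp = H w y / s ^ 2 := by
      have hy' : y ≠ 0 := hy.ne'
      rw [Hdef, Real.rpow_def_of_pos hw, Real.rpow_def_of_pos hy]
      have hy2 : Real.exp (Real.log y * (b/s^2 + 2)) =
          Real.exp (Real.log y * (b/s^2)) * y^2 := by
        rw [mul_add, Real.exp_add]
        congr 1
        rw [show Real.log y * 2 = Real.log (y^2) by rw [Real.log_pow]; push_cast; ring]
        exact Real.exp_log (by positivity)
      rw [hy2]
      have hLany : Lexp = (a/s^2*(1/w - 1/y)) + (Real.log w * (b/s^2))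
          - Real.log y * (b/s^2) := by rw [hLexp]; ring
      rw [hLany, Real.exp_sub, Real.exp_add]
      generalize Real.exp (a/s^2*(1/w - 1/y)) = P
      generalize Real.exp (Real.log w * (b/s^2)) = R
      generalize hQ' : Real.exp (Real.log y * (b/s^2)) = Q
      have hQ : Q ≠ 0 := hQ' ▸ Real.exp_ne_zero _
      field_simp
      try exact Or.inl trivial
    rw [← hval]
    exact hcomb
  
  have hεnonneg : ∀ ε w y : ℝ, 0 ≤ hε ε w y := by
    intro ε w y; rw [hεdef]; positivity
  have hcontw : ∀ ε : ℝ, 0 < ε → ∀ y : ℝ, 0 < y →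
      ContinuousOn (fun w => hε ε w y) (Ioi 0) := by
    intro ε he y hy
    have heq : ∀ w : ℝ, hε ε w y = ε ^ 2 / σ (y * ε) ^ 2 *
        Real.exp (-(∫ t in (y*ε)..(w*ε), (ε * b1 t - b2 t) / σ t ^ 2)) := by
      intro w
      rw [hεdef, intervalIntegral.integral_symm]
    have h8 : ContinuousOn (fun w : ℝ => ε ^ 2 / σ (y * ε) ^ 2 *
        Real.exp (-(∫ t in (y*ε)..(w*ε), (ε * b1 t - b2 t) / σ t ^ 2))) (Ioi 0) := by
      apply ContinuousOn.mul continuousOn_const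
      apply Real.continuous_exp.comp_continuousOn
      apply ContinuousOn.neg
      exact (aux_prim_cont' (hfc ε) (mul_pos hy he)).comp
        (continuous_mul_right ε).continuousOn (fun w hw => mul_pos hw he)
    exact h8.congr (fun w _ => heq w)
  set κ := m/(4*s^2) with hκdef
  have hκ0 : 0 < κ := by rw [hκdef]; positivity
  set c := 8*b/s^2 with hcdef
  have hc0 : 0 < c := by rw [hcdef]; positivity
  set D : ℝ → ℝ → ℝ := fun w y => 4/(s^2*y^2) *
    Real.exp (κ * (1/w - 1/y) + c * (Real.log w - Real.log y)) with hDdef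
  have hD : ∀ ε ∈ Ioc (0:ℝ) (δ/β), ∀ y w : ℝ, 0 < y → y ≤ w → w ≤ β →
      hε ε w y ≤ D w y := by
    intro ε hεm y w hy hyw hwβ
    simp only [hDdef]
    rw [hκdef, hcdef]
    have hε0 : 0 < ε := hεm.1
    have hw0 : 0 < w := lt_of_lt_of_le hy hyw
    have hyε : 0 < y*ε := mul_pos hy hε0
    have hwε : 0 < w*ε := mul_pos hw0 hε0
    have hwεδ : w*ε ≤ δ := by
      calc w*ε ≤ β*ε := by nlinarith
        _ ≤ β*(δ/β) := by nlinarith [hεm.2]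
        _ = δ := by field_simp
    have hywε : y*ε ≤ w*ε := by nlinarith
    have hyεδ : y*ε ≤ δ := le_trans hywε hwεδ
    obtain ⟨hσly, -, -⟩ := hδ (y*ε) hyε hyεδ
    have hσyp : 0 < σ (y*ε) := hσpos _ hyε
    have hy' : y ≠ 0 := hy.ne'
    have hε' : ε ≠ 0 := hε0.ne'
    have hpre : ε^2/σ (y*ε)^2 ≤ 4/(s^2*y^2) := by
      have h1 : (s/2*(y*ε))^2 ≤ σ (y*ε)^2 := pow_le_pow_left₀ (by positivity) hσly 2
      calc ε^2/σ (y*ε)^2 ≤ ε^2/(s/2*(y*ε))^2 :=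
            div_le_div_of_nonneg_left (sq_nonneg ε) (by positivity) h1
        _ = 4/(s^2*y^2) := by field_simp; ring
    have hexple : (∫ l in (w*ε)..(y*ε), (ε * b1 l - b2 l)/σ l^2) ≤
        m/(4*s^2)*(1/w - 1/y) + 8*b/s^2*(Real.log w - Real.log y) := by
      rw [intervalIntegral.integral_symm]
      have hmono : (∫ l in (y*ε)..(w*ε), (ε*m/(4*s^2) - 8*b/s^2 * l)/l^2) ≤
          ∫ l in (y*ε)..(w*ε), (ε * b1 l - b2 l)/σ l^2 := by
        apply intervalIntegral.integral_mono_on hywε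
        · apply ContinuousOn.intervalIntegrable
          apply ContinuousOn.div (by fun_prop) (by fun_prop)
          intro l hl
          have h9 : (0:ℝ) < l := aux_uIcc_pos' hyε hwε hl
          positivity
        · exact hfint ε hyε hwε
        · intro l hl
          have hl0 : 0 < l := lt_of_lt_of_le hyε hl.1
          have hlδ : l ≤ δ := le_trans hl.2 hwεδ
          obtain ⟨q1, q2, q3⟩ := hδ l hl0 hlδ
          have hσl : 0 < σ l := hσpos l hl0
          have hl' : l ≠ 0 := hl0.ne'
          have key1 : ε*m/(2*s*l)^2 ≤ ε*(b1 l)/σ l^2 := by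
            apply div_le_div₀ (mul_nonneg hε0.le (le_trans hm.le (hmb1 l (mem_Ici.mpr hl0.le))))
              (by nlinarith [hmb1 l (mem_Ici.mpr hl0.le)]) (by positivity) (by nlinarith)
          have key2 : b2 l/σ l^2 ≤ 2*b*l/(s/2*l)^2 := by
            apply div_le_div₀ (by nlinarith) q3 (by positivity) (by nlinarith)
          have hsplit : (ε * b1 l - b2 l)/σ l^2 = ε*(b1 l)/σ l^2 - b2 l/σ l^2 := by
            rw [← sub_div]
          have hlhs : (ε*m/(4*s^2) - 8*b/s^2 * l)/l^2 =
              ε*m/(2*s*l)^2 - 2*b*l/(s/2*l)^2 := by field_simp; ring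
          rw [hsplit, hlhs]
          linarith
      have hcomp : (∫ l in (y*ε)..(w*ε), (ε*m/(4*s^2) - 8*b/s^2 * l)/l^2) =
          m/(4*s^2)*(1/y - 1/w) + 8*b/s^2*(Real.log y - Real.log w) := by
        rw [show (fun l => (ε*m/(4*s^2) - 8*b/s^2 * l)/l^2) =
          (fun l => ((ε*m/(4*s^2)) - (8*b/s^2) * l)/l^2) from rfl]
        rw [aux_ftc' hyε hwε]
        rw [Real.log_mul hy' hε', Real.log_mul hw0.ne' hε']
        field_simp
        ring
      rw [hcomp] at hmono
      linarith
    calc hε ε w y = ε^2/σ (y*ε)^2 *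
          Real.exp (∫ l in (w*ε)..(y*ε), (ε * b1 l - b2 l)/σ l^2) := hεdef ε w y
      _ ≤ 4/(s^2*y^2) *
          Real.exp (m/(4*s^2)*(1/w - 1/y) + 8*b/s^2*(Real.log w - Real.log y)) := by
          apply mul_le_mul hpre (Real.exp_le_exp.mpr hexple) (Real.exp_pos _).le (by positivity)
  -- constant bounds on D
  set n : ℕ := ⌈c⌉₊ + 3 with hndef
  have hcn : c ≤ (n:ℝ) := by
    have h := Nat.le_ceil c
    have h2 : ((⌈c⌉₊ : ℝ)) ≤ (n:ℝ) := by rw [hndef]; push_cast; linarith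
    linarith
  have hpowk : ∀ y : ℝ, 0 < y → ∀ k : ℕ, 1 ≤ k →
      Real.exp (-(κ*(1/y))) * y⁻¹^k ≤ (k:ℝ)^k/κ^k := by
    intro y hy k hk
    have hE : (0:ℝ) < Real.exp (κ*(1/y)) * y^k := by positivity
    have h2 := aux_pow_le_exp' (x := κ*(1/y)) (by positivity) k hk
    have h3 : (κ*(1/y))^k * y^k = κ^k := by
      rw [← mul_pow]
      congr 1
      field_simp
    have hineq : κ^k ≤ (k:ℝ)^k * (Real.exp (κ*(1/y)) * y^k) := by
      calc κ^k = (κ*(1/y))^k * y^k := h3.symm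
        _ ≤ ((k:ℝ)^k * Real.exp (κ*(1/y))) * y^k :=
            mul_le_mul_of_nonneg_right h2 (by positivity)
        _ = (k:ℝ)^k * (Real.exp (κ*(1/y)) * y^k) := by ring
    rw [Real.exp_neg, inv_pow, ← mul_inv, ← one_div,
      div_le_div_iff₀ hE (by positivity)]
    linarith
  have hkey : ∀ y : ℝ, 0 < y →
      Real.exp (-(κ*(1/y)) - c*Real.log y)/y^2 ≤
        (((n:ℝ)+2)^(n+2)/κ^(n+2) + 2^2/κ^2) := by
    intro y hy
    have hlog : Real.exp (-(c*Real.log y)) ≤ y⁻¹^n + 1 := by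
      rcases le_total y 1 with h1 | h1
      · have hly : Real.log y ≤ 0 := Real.log_nonpos hy.le h1
        have h4 : -(c*Real.log y) ≤ (n:ℝ)*(-Real.log y) := by nlinarith
        calc Real.exp (-(c*Real.log y)) ≤ Real.exp ((n:ℝ)*(-Real.log y)) :=
              Real.exp_le_exp.mpr h4
          _ = y⁻¹^n := by
              rw [show (n:ℝ)*(-Real.log y) = Real.log (y⁻¹^n) by
                rw [Real.log_pow, Real.log_inv]]
              exact Real.exp_log (by positivity)
          _ ≤ y⁻¹^n + 1 := by linarith
      · have h4 : -(c*Real.log y) ≤ 0 := by nlinarith [Real.log_nonneg h1]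
        have h5 : (0:ℝ) ≤ y⁻¹^n := by positivity
        calc Real.exp (-(c*Real.log y)) ≤ Real.exp 0 := Real.exp_le_exp.mpr h4
          _ = 1 := Real.exp_zero
          _ ≤ y⁻¹^n + 1 := by linarith
    have e0 : Real.exp (-(κ*(1/y)) - c*Real.log y)/y^2 =
        Real.exp (-(κ*(1/y))) * Real.exp (-(c*Real.log y)) * y⁻¹^2 := by
      rw [show -(κ*(1/y)) - c*Real.log y = (-(κ*(1/y))) + (-(c*Real.log y)) by ring,
        Real.exp_add, div_eq_mul_inv, ← inv_pow]
    rw [e0]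
    calc Real.exp (-(κ*(1/y))) * Real.exp (-(c*Real.log y)) * y⁻¹^2
        ≤ Real.exp (-(κ*(1/y))) * (y⁻¹^n + 1) * y⁻¹^2 :=
          mul_le_mul_of_nonneg_right
            (mul_le_mul_of_nonneg_left hlog (Real.exp_pos _).le) (by positivity)
      _ = Real.exp (-(κ*(1/y))) * y⁻¹^(n+2) + Real.exp (-(κ*(1/y))) * y⁻¹^2 := by ring
      _ ≤ (((n:ℝ)+2)^(n+2)/κ^(n+2) + 2^2/κ^2) := by
          have p1 := hpowk y hy (n+2) (by omega)
          have p2 := hpowk y hy 2 (by omega)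
          push_cast at p1 p2 ⊢
          linarith
  set C1 : ℝ := 4/s^2 * Real.exp (κ*(1/α) + c*Real.log β) *
    (((n:ℝ)+2)^(n+2)/κ^(n+2) + 2^2/κ^2) with hC1def
  have hC1 : ∀ y ∈ Ioc (0:ℝ) α, ∀ w ∈ Icc α β, D w y ≤ C1 := by
    intro y hy w hw
    have hw0 : 0 < w := lt_of_lt_of_le hα hw.1
    have hy0 : 0 < y := hy.1
    have hsplit : D w y = 4/s^2 * Real.exp (κ*(1/w) + c*Real.log w) *
        (Real.exp (-(κ*(1/y)) - c*Real.log y)/y^2) := by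
      simp only [hDdef]
      rw [show κ*(1/w - 1/y) + c*(Real.log w - Real.log y)
          = (κ*(1/w) + c*Real.log w) + (-(κ*(1/y)) - c*Real.log y) by ring, Real.exp_add]
      have hy' : y ≠ 0 := hy0.ne'
      field_simp
    rw [hsplit, hC1def]
    have h1 : Real.exp (κ*(1/w) + c*Real.log w) ≤ Real.exp (κ*(1/α) + c*Real.log β) := by
      apply Real.exp_le_exp.mpr
      have l1 : 1/w ≤ 1/α := one_div_le_one_div_of_le hα hw.1
      have l2 : Real.log w ≤ Real.log β := Real.log_le_log hw0 hw.2
      nlinarith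
    have h2 := hkey y hy0
    have hnn : (0:ℝ) ≤ 4/s^2 := by positivity
    apply mul_le_mul (mul_le_mul_of_nonneg_left h1 hnn) h2 (by positivity) (by positivity)
  set C2 : ℝ := 4/(s^2*α^2) * Real.exp (c*(Real.log β - Real.log α)) with hC2def
  have hC2 : ∀ y ∈ Ioc α β, ∀ w ∈ Icc y β, D w y ≤ C2 := by
    intro y hy w hw
    have hy0 : 0 < y := hα.trans hy.1
    have hw0 : 0 < w := lt_of_lt_of_le hy0 hw.1
    simp only [hDdef, hC2def]
    have l1 : κ*(1/w - 1/y) ≤ 0 := by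
      have h0 : 1/w ≤ 1/y := one_div_le_one_div_of_le hy0 hw.1
      nlinarith
    have l2 : c*(Real.log w - Real.log y) ≤ c*(Real.log β - Real.log α) := by
      have r1 : Real.log w ≤ Real.log β := Real.log_le_log hw0 hw.2
      have r2 : Real.log α ≤ Real.log y := Real.log_le_log hα hy.1.le
      nlinarith
    have l3 : 4/(s^2*y^2) ≤ 4/(s^2*α^2) := by
      apply div_le_div_of_nonneg_left (by norm_num) (by positivity)
      exact mul_le_mul_of_nonneg_left (pow_le_pow_left₀ hα.le hy.1.le 2) (sq_nonneg s)
    apply mul_le_mul l3 (Real.exp_le_exp.mpr (by linarith)) (Real.exp_pos _).le (by positivity)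
  have hDcont : ∀ y : ℝ, 0 < y → ContinuousOn (fun w => D w y) (Ioi 0) := by
    intro y hy
    simp only [hDdef]
    apply ContinuousOn.mul continuousOn_const
    apply Real.continuous_exp.comp_continuousOn
    apply ContinuousOn.add
    · exact continuousOn_const.mul
        ((continuousOn_const.div continuousOn_id (fun w hw => ne_of_gt hw)).sub
          continuousOn_const)
    · exact continuousOn_const.mul
        ((Real.continuousOn_log.mono (fun w hw => ne_of_gt hw)).sub continuousOn_const)
  
  have hIab : uIoc α β = Ioc α β := uIoc_of_le hαβ.le
  have hI0a : uIoc (0:ℝ) α = Ioc 0 α := uIoc_of_le hα.le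
  have hevδ : Ioc (0:ℝ) (δ/β) ∈ 𝓝[>] (0:ℝ) :=
    Ioc_mem_nhdsGT_of_mem ⟨le_rfl, div_pos hδ0 hβ⟩
  -- inner convergence, region 1
  have hI1 : ∀ y ∈ Ioc (0:ℝ) α, Tendsto (fun ε => ∫ w in α..β, hε ε w y) (𝓝[>] 0)
      (𝓝 (∫ w in α..β, H w y / s^2)) := by
    intro y hy
    have hy0 : 0 < y := hy.1
    have hIsub : uIoc α β ⊆ Ioi 0 := by rw [hIab]; exact fun t ht => hα.trans ht.1
    apply intervalIntegral.tendsto_integral_filter_of_dominated_convergence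
      (bound := fun w => D w y)
    · filter_upwards [self_mem_nhdsWithin] with ε (hεm : ε ∈ Ioi 0)
      exact ((hcontw ε hεm y hy0).mono hIsub).aestronglyMeasurable measurableSet_uIoc
    · filter_upwards [hevδ] with ε hεm
      refine ae_of_all _ fun w hw => ?_
      rw [hIab] at hw
      rw [Real.norm_eq_abs, abs_of_nonneg (hεnonneg ε w y)]
      exact hD ε hεm y w hy0 (le_trans hy.2 hw.1.le) hw.2
    · exact ((hDcont y hy0).mono (aux_uIcc_pos' hα hβ)).intervalIntegrable
    · refine ae_of_all _ fun w hw => hP w y (hIsub hw) hy0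
  -- inner convergence, region 2
  have hI2 : ∀ y ∈ Ioc α β, Tendsto (fun ε => ∫ w in y..β, hε ε w y) (𝓝[>] 0)
      (𝓝 (∫ w in y..β, H w y / s^2)) := by
    intro y hy
    have hy0 : 0 < y := hα.trans hy.1
    have hIyβ : uIoc y β = Ioc y β := uIoc_of_le hy.2
    have hIsub : uIoc y β ⊆ Ioi 0 := by rw [hIyβ]; exact fun t ht => hy0.trans ht.1
    apply intervalIntegral.tendsto_integral_filter_of_dominated_convergence
      (bound := fun w => D w y)
    · filter_upwards [self_mem_nhdsWithin] with ε (hεm : ε ∈ Ioi 0)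
      exact ((hcontw ε hεm y hy0).mono hIsub).aestronglyMeasurable measurableSet_uIoc
    · filter_upwards [hevδ] with ε hεm
      refine ae_of_all _ fun w hw => ?_
      rw [hIyβ] at hw
      rw [Real.norm_eq_abs, abs_of_nonneg (hεnonneg ε w y)]
      exact hD ε hεm y w hy0 hw.1.le hw.2
    · exact ((hDcont y hy0).mono (aux_uIcc_pos' hy0 hβ)).intervalIntegrable
    · refine ae_of_all _ fun w hw => hP w y (hIsub hw) hy0
  -- continuity in y of the inner integrals, for fixed ε > 0
  have hσεc : ∀ ε : ℝ, 0 < ε → ContinuousOn (fun y : ℝ => ε^2/σ (y*ε)^2) (Ioi 0) := by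
    intro ε hε0
    apply ContinuousOn.div continuousOn_const
    · apply ContinuousOn.pow
      exact hσc.comp (continuous_mul_right ε).continuousOn
        (fun y hy => mem_Ici.mpr (mul_pos hy hε0).le)
    · intro y hy; exact pow_ne_zero 2 (hσpos _ (mul_pos hy hε0)).ne'
  have hprimεc : ∀ ε : ℝ, 0 < ε →
      ContinuousOn (fun y : ℝ => Real.exp (∫ t in (α*ε)..(y*ε), (ε * b1 t - b2 t) / σ t ^ 2))
        (Ioi 0) := by
    intro ε hε0
    apply Real.continuous_exp.comp_continuousOn
    exact (aux_prim_cont' (hfc ε) (mul_pos hα hε0)).comp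
      (continuous_mul_right ε).continuousOn (fun y hy => mul_pos hy hε0)
  have hkc : ∀ ε : ℝ, 0 < ε →
      ContinuousOn (fun w : ℝ => Real.exp (∫ t in (w*ε)..(α*ε), (ε * b1 t - b2 t) / σ t ^ 2))
        (Ioi 0) := by
    intro ε hε0
    apply Real.continuous_exp.comp_continuousOn
    have h1 : ∀ w : ℝ, (∫ t in (w*ε)..(α*ε), (ε * b1 t - b2 t) / σ t ^ 2) =
        -(∫ t in (α*ε)..(w*ε), (ε * b1 t - b2 t) / σ t ^ 2) :=
      fun w => intervalIntegral.integral_symm _ _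
    apply ContinuousOn.congr _ (fun w _ => h1 w)
    apply ContinuousOn.neg
    exact (aux_prim_cont' (hfc ε) (mul_pos hα hε0)).comp
      (continuous_mul_right ε).continuousOn (fun w hw => mul_pos hw hε0)
  have hmeas1 : ∀ ε : ℝ, 0 < ε →
      ContinuousOn (fun y => ∫ w in α..β, hε ε w y) (Ioi 0) := by
    intro ε hε0
    have hfact : ∀ y ∈ Ioi (0:ℝ), (∫ w in α..β, hε ε w y) =
        (∫ w in α..β, Real.exp (∫ t in (w*ε)..(α*ε), (ε * b1 t - b2 t) / σ t ^ 2)) *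
          (ε^2/σ (y*ε)^2 *
            Real.exp (∫ t in (α*ε)..(y*ε), (ε * b1 t - b2 t) / σ t ^ 2)) := by
      intro y hy
      rw [← intervalIntegral.integral_mul_const]
      apply intervalIntegral.integral_congr
      intro w hw
      have hw0 : 0 < w := aux_uIcc_pos' hα hβ hw
      show hε ε w y = _
      rw [hεdef, ← intervalIntegral.integral_add_adjacent_intervals
        (hfint ε (mul_pos hw0 hε0) (mul_pos hα hε0))
        (hfint ε (mul_pos hα hε0) (mul_pos hy hε0)), Real.exp_add]
      ring
    exact (continuousOn_const.mul ((hσεc ε hε0).mul (hprimεc ε hε0))).congr hfact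
  have hmeas2 : ∀ ε : ℝ, 0 < ε →
      ContinuousOn (fun y => ∫ w in y..β, hε ε w y) (Ioi 0) := by
    intro ε hε0
    have hkint : ∀ p q : ℝ, 0 < p → 0 < q → IntervalIntegrable
        (fun w : ℝ => Real.exp (∫ t in (w*ε)..(α*ε), (ε * b1 t - b2 t) / σ t ^ 2))
        volume p q :=
      fun p q hp hq => ((hkc ε hε0).mono (aux_uIcc_pos' hp hq)).intervalIntegrable
    have hfact : ∀ y ∈ Ioi (0:ℝ), (∫ w in y..β, hε ε w y) =
        (ε^2/σ (y*ε)^2 *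
          Real.exp (∫ t in (α*ε)..(y*ε), (ε * b1 t - b2 t) / σ t ^ 2)) *
        ((∫ w in α..β, Real.exp (∫ t in (w*ε)..(α*ε), (ε * b1 t - b2 t) / σ t ^ 2)) -
          (∫ w in α..y, Real.exp (∫ t in (w*ε)..(α*ε), (ε * b1 t - b2 t) / σ t ^ 2))) := by
      intro y hy
      have hstep1 : (∫ w in y..β, hε ε w y) = ∫ w in y..β,
          (ε^2/σ (y*ε)^2 *
            Real.exp (∫ t in (α*ε)..(y*ε), (ε * b1 t - b2 t) / σ t ^ 2)) *
          Real.exp (∫ t in (w*ε)..(α*ε), (ε * b1 t - b2 t) / σ t ^ 2) := by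
        apply intervalIntegral.integral_congr
        intro w hw
        have hw0 : 0 < w := aux_uIcc_pos' hy hβ hw
        show hε ε w y = _
        rw [hεdef, ← intervalIntegral.integral_add_adjacent_intervals
          (hfint ε (mul_pos hw0 hε0) (mul_pos hα hε0))
          (hfint ε (mul_pos hα hε0) (mul_pos hy hε0)), Real.exp_add]
        ring
      rw [hstep1, intervalIntegral.integral_const_mul]
      congr 1
      have hadd := intervalIntegral.integral_add_adjacent_intervals
        (hkint α y hα hy) (hkint y β hy hβ)
      linarith
    apply ContinuousOn.congr _ hfact
    apply ContinuousOn.mul ((hσεc ε hε0).mul (hprimεc ε hε0))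
    exact continuousOn_const.sub (aux_prim_cont' (hkc ε hε0) hα)
  -- outer convergence, region 1
  have hO1 : Tendsto (fun ε => ∫ y in (0:ℝ)..α, ∫ w in α..β, hε ε w y) (𝓝[>] 0)
      (𝓝 (∫ y in (0:ℝ)..α, ∫ w in α..β, H w y / s^2)) := by
    apply intervalIntegral.tendsto_integral_filter_of_dominated_convergence
      (bound := fun _ => (β - α) * C1)
    · filter_upwards [self_mem_nhdsWithin] with ε (hεm : ε ∈ Ioi 0)
      have hsub : uIoc (0:ℝ) α ⊆ Ioi 0 := by rw [hI0a]; exact fun t ht => ht.1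
      exact ((hmeas1 ε hεm).mono hsub).aestronglyMeasurable measurableSet_uIoc
    · filter_upwards [hevδ] with ε hεm
      refine ae_of_all _ fun y hy => ?_
      rw [hI0a] at hy
      have hy0 : 0 < y := hy.1
      rw [Real.norm_eq_abs, abs_of_nonneg
        (intervalIntegral.integral_nonneg hαβ.le (fun w _ => hεnonneg ε w y))]
      calc (∫ w in α..β, hε ε w y) ≤ ∫ w in α..β, D w y := by
            apply intervalIntegral.integral_mono_on hαβ.le
            · exact ((hcontw ε hεm.1 y hy0).mono (aux_uIcc_pos' hα hβ)).intervalIntegrable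
            · exact ((hDcont y hy0).mono (aux_uIcc_pos' hα hβ)).intervalIntegrable
            · intro w hw; exact hD ε hεm y w hy0 (le_trans hy.2 hw.1) hw.2
        _ ≤ ∫ w in α..β, C1 := by
            apply intervalIntegral.integral_mono_on hαβ.le
              ((hDcont y hy0).mono (aux_uIcc_pos' hα hβ)).intervalIntegrable
              intervalIntegrable_const
            intro w hw; exact hC1 y hy w hw
        _ = (β - α) * C1 := by
            rw [intervalIntegral.integral_const, smul_eq_mul]
    · exact intervalIntegrable_const
    · refine ae_of_all _ fun y hy => ?_
      rw [hI0a] at hy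
      exact hI1 y hy
  -- outer convergence, region 2
  have hO2 : Tendsto (fun ε => ∫ y in α..β, ∫ w in y..β, hε ε w y) (𝓝[>] 0)
      (𝓝 (∫ y in α..β, ∫ w in y..β, H w y / s^2)) := by
    have hC2nn : 0 ≤ C2 := by rw [hC2def]; positivity
    apply intervalIntegral.tendsto_integral_filter_of_dominated_convergence
      (bound := fun _ => (β - α) * C2)
    · filter_upwards [self_mem_nhdsWithin] with ε (hεm : ε ∈ Ioi 0)
      have hsub : uIoc α β ⊆ Ioi 0 := by rw [hIab]; exact fun t ht => hα.trans ht.1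
      exact ((hmeas2 ε hεm).mono hsub).aestronglyMeasurable measurableSet_uIoc
    · filter_upwards [hevδ] with ε hεm
      refine ae_of_all _ fun y hy => ?_
      rw [hIab] at hy
      have hy0 : 0 < y := hα.trans hy.1
      rw [Real.norm_eq_abs, abs_of_nonneg
        (intervalIntegral.integral_nonneg hy.2 (fun w _ => hεnonneg ε w y))]
      calc (∫ w in y..β, hε ε w y) ≤ ∫ w in y..β, C2 := by
            apply intervalIntegral.integral_mono_on hy.2
              ((hcontw ε hεm.1 y hy0).mono (aux_uIcc_pos' hy0 hβ)).intervalIntegrable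
              intervalIntegrable_const
            intro w hw
            exact le_trans (hD ε hεm y w hy0 hw.1 hw.2) (hC2 y hy w hw)
        _ = (β - y) * C2 := by rw [intervalIntegral.integral_const, smul_eq_mul]
        _ ≤ (β - α) * C2 := by nlinarith [hy.1]
    · exact intervalIntegrable_const
    · refine ae_of_all _ fun y hy => ?_
      rw [hIab] at hy
      exact hI2 y hy
  
  -- combine the two limits
  have hfinal := (hO1.add hO2).const_mul (2:ℝ)
  have hvaleq : (2:ℝ) * ((∫ y in (0:ℝ)..α, ∫ w in α..β, H w y / s^2) +
      (∫ y in α..β, ∫ w in y..β, H w y / s^2))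
      = 2/s^2 * ((∫ y in (0:ℝ)..α, ∫ w in α..β, H w y) +
        (∫ y in α..β, ∫ w in y..β, H w y)) := by
    have e1 : (∫ y in (0:ℝ)..α, ∫ w in α..β, H w y / s^2) =
        (∫ y in (0:ℝ)..α, ∫ w in α..β, H w y)/s^2 := by
      simp_rw [intervalIntegral.integral_div]
    have e2 : (∫ y in α..β, ∫ w in y..β, H w y / s^2) =
        (∫ y in α..β, ∫ w in y..β, H w y)/s^2 := by
      simp_rw [intervalIntegral.integral_div]
    rw [e1, e2]
    ring
  constructor
  · rw [← hvaleq]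
    exact hfinal
  · -- positivity of the limit
    have hHnonneg : ∀ w y : ℝ, 0 ≤ w → 0 ≤ y → 0 ≤ H w y := by
      intro w y hw hy; rw [Hdef]
      exact div_nonneg (mul_nonneg (Real.exp_pos _).le (Real.rpow_nonneg hw _))
        (Real.rpow_nonneg hy _)
    have hHpos : ∀ w y : ℝ, 0 < w → 0 < y → 0 < H w y := by
      intro w y hw hy; rw [Hdef]
      exact div_pos (mul_pos (Real.exp_pos _) (Real.rpow_pos_of_pos hw _))
        (Real.rpow_pos_of_pos hy _)
    have hX : 0 ≤ ∫ y in (0:ℝ)..α, ∫ w in α..β, H w y :=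
      intervalIntegral.integral_nonneg hα.le (fun y hy =>
        intervalIntegral.integral_nonneg hαβ.le (fun w hw =>
          hHnonneg w y (le_trans hα.le hw.1) hy.1))
    -- factorization of H
    have hHfac : ∀ w y : ℝ, 0 < w → 0 < y →
        H w y = (Real.exp (a/s^2*(1/w)) * w ^ (b/s^2)) *
          (Real.exp (-(a/s^2*(1/y))) / y ^ (b/s^2+2)) := by
      intro w y hw hy
      rw [Hdef, show a/s^2*(1/w - 1/y) = a/s^2*(1/w) + (-(a/s^2*(1/y))) by ring,
        Real.exp_add]
      ring
    have hvcont : ContinuousOn (fun w : ℝ => Real.exp (a/s^2*(1/w)) * w ^ (b/s^2))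
        (Ioi 0) := by
      apply ContinuousOn.mul
      · apply Real.continuous_exp.comp_continuousOn
        exact continuousOn_const.mul
          (continuousOn_const.div continuousOn_id (fun w hw => ne_of_gt hw))
      · exact fun w hw => (Real.continuousAt_rpow_const w _ (Or.inl (ne_of_gt hw))).continuousWithinAt
    have hucont : ContinuousOn (fun y : ℝ => Real.exp (-(a/s^2*(1/y))) / y ^ (b/s^2+2))
        (Ioi 0) := by
      apply ContinuousOn.div
      · apply Real.continuous_exp.comp_continuousOn
        apply ContinuousOn.neg
        exact continuousOn_const.mul
          (continuousOn_const.div continuousOn_id (fun y hy => ne_of_gt hy))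
      · exact fun y hy => (Real.continuousAt_rpow_const y _ (Or.inl (ne_of_gt hy))).continuousWithinAt
      · intro y hy; exact (Real.rpow_pos_of_pos hy _).ne'
    have hHcontw : ∀ y : ℝ, 0 < y → ContinuousOn (fun w => H w y) (Ioi 0) := by
      intro y hy
      exact (hvcont.mul continuousOn_const).congr (fun w hw => hHfac w y hw hy)
    have hψcont : ContinuousOn (fun y => ∫ w in y..β, H w y) (Ioi 0) := by
      have hEq : ∀ y ∈ Ioi (0:ℝ), (∫ w in y..β, H w y) =
          (-(∫ w in β..y, Real.exp (a/s^2*(1/w)) * w ^ (b/s^2))) *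
            (Real.exp (-(a/s^2*(1/y))) / y ^ (b/s^2+2)) := by
        intro y hy
        rw [← intervalIntegral.integral_symm, ← intervalIntegral.integral_mul_const]
        apply intervalIntegral.integral_congr
        intro w hw
        exact hHfac w y (aux_uIcc_pos' hy hβ hw) hy
      exact (((aux_prim_cont' hvcont hβ).neg).mul hucont).congr hEq
    have hY : 0 < ∫ y in α..β, ∫ w in y..β, H w y := by
      apply intervalIntegral.intervalIntegral_pos_of_pos_on
      · exact (hψcont.mono (aux_uIcc_pos' hα hβ)).intervalIntegrable
      · intro y hy
        apply intervalIntegral.intervalIntegral_pos_of_pos_on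
        · exact ((hHcontw y (hα.trans hy.1)).mono
            (aux_uIcc_pos' (hα.trans hy.1) hβ)).intervalIntegrable
        · intro w hw
          exact hHpos w y ((hα.trans hy.1).trans hw.1) (hα.trans hy.1)
        · exact hy.2
      · exact hαβ
    have hsum : 0 < (∫ y in (0:ℝ)..α, ∫ w in α..β, H w y) +
        (∫ y in α..β, ∫ w in y..β, H w y) := by linarith
    exact mul_pos (by positivity) hsum
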